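/- Fix 0 < τ < ∞ and a positive integer v₀. Let (Ω, ℱ, P) be a probability space, K : Ω → {0, 1, …, v₀} a random variable, T₁, …, T_{v₀} : Ω → (0, τ] random variables, and (L₁, L₂) : Ω → ℝ² a random pair such that σ(L₁, L₂) is independent of σ(K, T₁, …, T_{v₀}). Define two finite Borel measures on (0, τ]: ν(B) = E[∑_{v=1}^{v₀} 1{v ≤ K} 1{T_v ∈ B}] (the expected complete-data counting measure) and ν_obs(B) = E[∑_{v=1}^{v₀} 1{v ≤ K} 1{T_v ∈ B} 1{L₁ < T_v ≤ L₂}] (the expected observed counting measure under left truncation at L₁ and right censoring at L₂). Then ν_obs has density r with respect to ν, where r(u) = P(L₁ < u ≤ L₂); that is, ν_obs(B) = ∫_B r(u) dν(u) for every Borel set B ⊆ (0, τ]. -/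

import Mathlib

open MeasureTheory ProbabilityTheory
open scoped ENNReal

/-- Under independent left truncation `L₁` and right censoring `L₂` (condition C1),
the expected observed counting measure `ν_obs` has density `r(u) = P(L₁ < u ≤ L₂)`
with respect to the expected complete-data counting measure `ν`. -/
theorem observed_counting_measure_density
    {Ω : Type*} [MeasurableSpace Ω] (P : Measure Ω) [IsProbabilityMeasure P]
    (τ : ℝ) (hτ : 0 < τ) (v₀ : ℕ) (hv₀ : 0 < v₀)
    (K : Ω → ℕ) (hK_meas : Measurable K) (hK_range : ∀ ω, K ω ≤ v₀)
    (T : ℕ → Ω → ℝ) (hT_meas : ∀ v, Measurable (T v))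
    (hT_range : ∀ v ω, T v ω ∈ Set.Ioc 0 τ)
    (L₁ L₂ : Ω → ℝ) (hL_meas : Measurable (fun ω => (L₁ ω, L₂ ω)))
    -- σ(L₁, L₂) is independent of σ(K, T₁, …, T_{v₀})
    (h_indep : Indep
      (MeasurableSpace.comap (fun ω => (L₁ ω, L₂ ω)) inferInstance)
      (MeasurableSpace.comap (fun ω => (K ω, fun v : Fin v₀ => T (v + 1) ω)) inferInstance)
      P)
    -- expected complete-data counting measure
    (ν : Measure ℝ)
    (hν : ∀ B : Set ℝ, MeasurableSet B →
      ν B = ∫⁻ ω, (∑ v ∈ Finset.Icc 1 v₀,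
        (if v ≤ K ω then (1 : ℝ≥0∞) else 0) * B.indicator 1 (T v ω)) ∂P)
    -- expected observed counting measure under truncation/censoring
    (ν_obs : Measure ℝ)
    (hν_obs : ∀ B : Set ℝ, MeasurableSet B →
      ν_obs B = ∫⁻ ω, (∑ v ∈ Finset.Icc 1 v₀,
        (if v ≤ K ω then (1 : ℝ≥0∞) else 0) * B.indicator 1 (T v ω)
          * (Set.Ioc (L₁ ω) (L₂ ω)).indicator 1 (T v ω)) ∂P) :
    ∀ B : Set ℝ, MeasurableSet B → B ⊆ Set.Ioc 0 τ →
      ν_obs B = ∫⁻ u in B, P {ω | L₁ ω < u ∧ u ≤ L₂ ω} ∂ν := by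
  intro B hB _
  set X : Ω → ℝ × ℝ := fun ω => (L₁ ω, L₂ ω) with hX_def
  set Y : Ω → ℕ × (Fin v₀ → ℝ) := fun ω => (K ω, fun v : Fin v₀ => T (v + 1) ω) with hY_def
  have hX : Measurable X := hL_meas
  have hY : Measurable Y :=
    hK_meas.prodMk (measurable_pi_lambda _ fun v => hT_meas (v + 1))
  set r : ℝ → ℝ≥0∞ := fun u => P {ω | L₁ ω < u ∧ u ≤ L₂ ω} with hr_def
  have hmeas_slice : ∀ u : ℝ, MeasurableSet {x : ℝ × ℝ | x.1 < u ∧ u ≤ x.2} := fun u =>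
    (measurableSet_lt measurable_fst measurable_const).inter
      (measurableSet_le measurable_const measurable_snd)
  -- r as a measure of a set under the law of X
  have hrX : ∀ u, r u = (P.map X) {x : ℝ × ℝ | x.1 < u ∧ u ≤ x.2} := by
    intro u
    rw [Measure.map_apply hX (hmeas_slice u)]
    rfl
  have hr_meas : Measurable r := by
    have hs : MeasurableSet {p : ℝ × (ℝ × ℝ) | p.2.1 < p.1 ∧ p.1 ≤ p.2.2} :=
      (measurableSet_lt (measurable_snd.fst) measurable_fst).inter
        (measurableSet_le measurable_fst measurable_snd.snd)
    have h := measurable_measure_prodMk_left (ν := P.map X) hs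
    have : r = fun u => (P.map X) (Prod.mk u ⁻¹' {p : ℝ × (ℝ × ℝ) | p.2.1 < p.1 ∧ p.1 ≤ p.2.2}) := by
      funext u
      rw [hrX u]
      rfl
    rw [this]
    exact h
  have h_map : P.map (fun ω => (X ω, Y ω)) = (P.map X).prod (P.map Y) :=
    (indepFun_iff_map_prod_eq_prod_map_map hX.aemeasurable hY.aemeasurable).mp h_indep
  -- indicator density functions
  have hc_meas : ∀ v : ℕ, Measurable fun ω => (if v ≤ K ω then (1 : ℝ≥0∞) else 0) := by
    intro v
    exact Measurable.ite (hK_meas (measurableSet_le measurable_const measurable_id)) measurable_const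
      measurable_const
  -- key pointwise independence computation for each v
  have key : ∀ v ∈ Finset.Icc 1 v₀,
      (∫⁻ ω, (if v ≤ K ω then (1 : ℝ≥0∞) else 0) * B.indicator 1 (T v ω)
          * (Set.Ioc (L₁ ω) (L₂ ω)).indicator 1 (T v ω) ∂P)
      = ∫⁻ ω, (if v ≤ K ω then (1 : ℝ≥0∞) else 0) * B.indicator 1 (T v ω) * r (T v ω) ∂P := by
    intro v hv
    rw [Finset.mem_Icc] at hv
    set i : Fin v₀ := ⟨v - 1, by omega⟩ with hi_def
    have hvi : (i : ℕ) + 1 = v := by simp [hi_def]; omega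
    have hTi : ∀ ω, (Y ω).2 i = T v ω := by
      intro ω
      show T ((i : ℕ) + 1) ω = T v ω
      rw [hvi]
    set g : ℕ × (Fin v₀ → ℝ) → ℝ≥0∞ :=
      fun y => (if v ≤ y.1 then 1 else 0) * B.indicator 1 (y.2 i) with hg_def
    have hg_meas : Measurable g := by
      apply Measurable.mul
      · exact (measurable_from_top (f := fun n : ℕ => if v ≤ n then (1:ℝ≥0∞) else 0)).comp
          measurable_fst
      · exact (measurable_one.indicator hB).comp (measurable_snd.eval)
    have hg_ne_top : ∀ y, g y ≠ ∞ := by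
      intro y
      have hb : B.indicator (1 : ℝ → ℝ≥0∞) (y.2 i) ≤ 1 := by
        refine le_trans (Set.indicator_le_self B 1 (y.2 i)) ?_
        simp
      have hc : (if v ≤ y.1 then (1:ℝ≥0∞) else 0) ≤ 1 := by split_ifs <;> simp
      exact ne_top_of_le_ne_top ENNReal.one_ne_top
        (le_trans (mul_le_mul' hc hb) (by simp))
    set S : Set ((ℝ × ℝ) × (ℕ × (Fin v₀ → ℝ))) :=
      {p | p.1.1 < p.2.2 i ∧ p.2.2 i ≤ p.1.2} with hS_def
    have hS_meas : MeasurableSet S := by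
      have h1 : MeasurableSet {p : (ℝ × ℝ) × (ℕ × (Fin v₀ → ℝ)) | p.1.1 < p.2.2 i} :=
        measurableSet_lt (measurable_fst.fst) (measurable_snd.snd.eval)
      have h2 : MeasurableSet {p : (ℝ × ℝ) × (ℕ × (Fin v₀ → ℝ)) | p.2.2 i ≤ p.1.2} :=
        measurableSet_le (measurable_snd.snd.eval) (measurable_fst.snd)
      rw [hS_def]
      exact h1.inter h2
    set G : (ℝ × ℝ) × (ℕ × (Fin v₀ → ℝ)) → ℝ≥0∞ := fun p => g p.2 * S.indicator 1 p with hG_def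
    have hG_meas : Measurable G :=
      (hg_meas.comp measurable_snd).mul (measurable_one.indicator hS_meas)
    have step1 : ∀ ω, (if v ≤ K ω then (1 : ℝ≥0∞) else 0) * B.indicator 1 (T v ω)
          * (Set.Ioc (L₁ ω) (L₂ ω)).indicator 1 (T v ω) = G (X ω, Y ω) := by
      intro ω
      have h1 : (Y ω).2 i = T v ω := hTi ω
      simp only [hG_def, hg_def, hS_def, Set.indicator_apply, Set.mem_Ioc, Set.mem_setOf_eq,
        Pi.one_apply, hX_def, hY_def, h1, hvi]
    calc
      (∫⁻ ω, (if v ≤ K ω then (1 : ℝ≥0∞) else 0) * B.indicator 1 (T v ω)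
          * (Set.Ioc (L₁ ω) (L₂ ω)).indicator 1 (T v ω) ∂P)
          = ∫⁻ ω, G (X ω, Y ω) ∂P := lintegral_congr step1
      _ = ∫⁻ p, G p ∂(P.map (fun ω => (X ω, Y ω))) :=
            (lintegral_map hG_meas (hX.prodMk hY)).symm
      _ = ∫⁻ p, G p ∂((P.map X).prod (P.map Y)) := by rw [h_map]
      _ = ∫⁻ y, ∫⁻ x, G (x, y) ∂(P.map X) ∂(P.map Y) := by
            have : IsFiniteMeasure (P.map X) :=
              ⟨by rw [Measure.map_apply hX MeasurableSet.univ]; exact measure_lt_top _ _⟩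
            exact lintegral_prod_symm' G hG_meas
      _ = ∫⁻ y, g y * r (y.2 i) ∂(P.map Y) := by
            refine lintegral_congr fun y => ?_
            have h2 : ∀ x : ℝ × ℝ, G (x, y) =
                g y * ({x : ℝ × ℝ | x.1 < y.2 i ∧ y.2 i ≤ x.2}).indicator 1 x := by
              intro x
              simp only [hG_def, hS_def, Set.indicator_apply, Set.mem_setOf_eq, Pi.one_apply]
            rw [lintegral_congr h2, lintegral_const_mul' _ _ (hg_ne_top y),
              lintegral_indicator (hmeas_slice (y.2 i)) 1]
            simp only [Pi.one_apply]
            rw [setLIntegral_one, ← hrX]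
      _ = ∫⁻ ω, g (Y ω) * r ((Y ω).2 i) ∂P := by
            refine lintegral_map ?_ hY
            exact hg_meas.mul (hr_meas.comp (measurable_snd.eval))
      _ = ∫⁻ ω, (if v ≤ K ω then (1 : ℝ≥0∞) else 0) * B.indicator 1 (T v ω) * r (T v ω) ∂P := by
            refine lintegral_congr fun ω => ?_
            simp only [hg_def]
            show (if v ≤ K ω then (1:ℝ≥0∞) else 0) * B.indicator 1 ((Y ω).2 i) * r ((Y ω).2 i) = _
            rw [hTi ω]
  -- decompose ν as a finite sum of image measures
  have hν_eq : ν = ∑ v ∈ Finset.Icc 1 v₀,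
      ((P.withDensity fun ω => if v ≤ K ω then (1 : ℝ≥0∞) else 0).map (T v)) := by
    ext s hs
    have hfm : ∀ v ∈ Finset.Icc 1 v₀, Measurable fun ω =>
        (if v ≤ K ω then (1 : ℝ≥0∞) else 0) * s.indicator 1 (T v ω) :=
      fun v _ => (hc_meas v).mul ((measurable_one.indicator hs).comp (hT_meas v))
    rw [hν s hs, Measure.finset_sum_apply, lintegral_finset_sum _ hfm]
    refine Finset.sum_congr rfl fun v _ => ?_
    rw [Measure.map_apply (hT_meas v) hs, withDensity_apply _ ((hT_meas v) hs),
      ← lintegral_indicator ((hT_meas v) hs)]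
    refine lintegral_congr fun ω => ?_
    by_cases h : T v ω ∈ s <;>
      simp [Set.indicator_of_mem, Set.indicator_of_notMem, h, Set.mem_preimage]
  -- compute the right-hand side
  have hRHS : (∫⁻ u in B, r u ∂ν)
      = ∑ v ∈ Finset.Icc 1 v₀, ∫⁻ ω,
        (if v ≤ K ω then (1 : ℝ≥0∞) else 0) * B.indicator 1 (T v ω) * r (T v ω) ∂P := by
    rw [← lintegral_indicator hB, hν_eq, lintegral_finset_sum_measure]
    refine Finset.sum_congr rfl fun v _ => ?_
    have hg' : Measurable fun ω => B.indicator r (T v ω) :=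
      (hr_meas.indicator hB).comp (hT_meas v)
    rw [lintegral_map (hr_meas.indicator hB) (hT_meas v),
      lintegral_withDensity_eq_lintegral_mul _ (hc_meas v) hg']
    refine lintegral_congr fun ω => ?_
    simp only [Pi.mul_apply]
    by_cases h : T v ω ∈ B <;>
      simp [Set.indicator_of_mem, Set.indicator_of_notMem, h, mul_assoc]
  have hfm2 : ∀ v ∈ Finset.Icc 1 v₀, Measurable fun ω =>
      (if v ≤ K ω then (1 : ℝ≥0∞) else 0) * B.indicator 1 (T v ω)
        * (Set.Ioc (L₁ ω) (L₂ ω)).indicator 1 (T v ω) := by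
    intro v _
    have hA : MeasurableSet {ω | L₁ ω < T v ω ∧ T v ω ≤ L₂ ω} :=
      (measurableSet_lt hX.fst (hT_meas v)).inter
        (measurableSet_le (hT_meas v) hX.snd)
    have heq : (fun ω => (Set.Ioc (L₁ ω) (L₂ ω)).indicator 1 (T v ω))
        = ({ω | L₁ ω < T v ω ∧ T v ω ≤ L₂ ω}).indicator (fun _ => (1 : ℝ≥0∞)) := by
      funext ω
      simp only [Set.indicator_apply, Set.mem_Ioc, Set.mem_setOf_eq, Pi.one_apply]
    refine ((hc_meas v).mul ((measurable_one.indicator hB).comp (hT_meas v))).mul ?_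
    rw [heq]
    exact measurable_const.indicator hA
  rw [hν_obs B hB, hRHS, lintegral_finset_sum _ hfm2]
  exact Finset.sum_congr rfl key
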